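/- Fix n ≥ 1 and positive reals Δ₁,…,Δ_n with Δ = Δ₁⋯Δ_n. Let L_n ∈ ℝ^{n×n} have entries [L_n]_{i,i} = 12(3n−2)/(Δ_i²(3n+1)) and [L_n]_{i,j} = −36/(Δ_iΔ_j(3n+1)) for i ≠ j. Let g ∈ ℝⁿ be arbitrary and define v ∈ ℝⁿ by v_i = ∫_{R(0;d)} x_i · (gᵀx) dx, the integral over the box R(0;d) = ∏_{i=1}^n [0, Δ_i] ⊂ ℝⁿ with respect to Lebesgue measure. Then (1/Δ) · L_n · v = g. -/

import Mathlib

open scoped BigOperators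

noncomputable section

/-- The box `R(0;d) = ∏ᵢ [0, Δᵢ]` in Euclidean space. -/
def box {n : ℕ} (Δ : Fin n → ℝ) : Set (EuclideanSpace ℝ (Fin n)) :=
  {x | ∀ l, x l ∈ Set.Icc (0 : ℝ) (Δ l)}

/-- The limit matrix `Lₙ`. -/
def Lmat (n : ℕ) (Δ : Fin n → ℝ) : Matrix (Fin n) (Fin n) ℝ :=
  Matrix.of fun i j =>
    if i = j then 12 * (3 * (n : ℝ) - 2) / ((Δ i) ^ 2 * (3 * (n : ℝ) + 1))
    else -36 / (Δ i * Δ j * (3 * (n : ℝ) + 1))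

open MeasureTheory Set in
lemma setIntegral_pi_prod {n : ℕ} (s : ∀ _ : Fin n, Set ℝ) (f : ∀ _ : Fin n, ℝ → ℝ)
    (hs : ∀ i, MeasurableSet (s i)) :
    ∫ x in Set.pi Set.univ s, ∏ l, f l (x l) = ∏ l, ∫ x in s l, f l x := by
  rw [← MeasureTheory.integral_indicator (MeasurableSet.univ_pi hs)]
  have h : ∀ x : Fin n → ℝ, (Set.pi Set.univ s).indicator (fun x => ∏ l, f l (x l)) x
      = ∏ l, (s l).indicator (f l) (x l) := by
    intro x
    by_cases hx : x ∈ Set.pi Set.univ s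
    · rw [Set.indicator_of_mem hx]
      exact Finset.prod_congr rfl fun l _ => (Set.indicator_of_mem (hx l (Set.mem_univ l)) _).symm
    · rw [Set.indicator_of_notMem hx]
      rw [Set.mem_univ_pi] at hx
      push_neg at hx
      obtain ⟨l, hl⟩ := hx
      exact (Finset.prod_eq_zero (Finset.mem_univ l) (Set.indicator_of_notMem hl _)).symm
  simp_rw [h]
  rw [volume_pi, MeasureTheory.integral_fintype_prod_eq_prod (f := fun l => (s l).indicator (f l))]
  exact Finset.prod_congr rfl fun l _ => by rw [integral_indicator (hs l)]

open MeasureTheory Set in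
lemma moment {n : ℕ} (Δ : Fin n → ℝ) (hΔ : ∀ i, 0 < Δ i) (i j : Fin n) :
    ∫ x in Set.pi Set.univ (fun l => Set.Icc (0:ℝ) (Δ l)), x i * x j
      = (∏ l, Δ l) * (if i = j then Δ i ^ 2 / 3 else Δ i * Δ j / 4) := by
  have key : ∀ x : Fin n → ℝ, x i * x j
      = ∏ l, ((if l = i then x l else 1) * (if l = j then x l else 1)) := by
    intro x
    rw [Finset.prod_mul_distrib]
    simp [Finset.prod_ite_eq']
  have lhs_eq : (∫ x in Set.pi Set.univ (fun l => Set.Icc (0:ℝ) (Δ l)), x i * x j)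
      = ∏ l, ∫ t in Set.Icc (0:ℝ) (Δ l),
          ((if l = i then t else 1) * (if l = j then t else 1)) := by
    rw [← setIntegral_pi_prod (fun l => Set.Icc (0:ℝ) (Δ l))
      (fun l t => (if l = i then t else 1) * (if l = j then t else 1))
      (fun _ => measurableSet_Icc)]
    exact integral_congr_ae (Filter.Eventually.of_forall fun x => key x)
  rw [lhs_eq]
  have h1 : ∀ Δ' : ℝ, 0 < Δ' → ∫ t in Set.Icc (0:ℝ) Δ', t = Δ'^2/2 := by
    intro Δ' h
    rw [integral_Icc_eq_integral_Ioc, ← intervalIntegral.integral_of_le h.le]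
    simp [integral_id]
  have h2 : ∀ Δ' : ℝ, 0 < Δ' → ∫ t in Set.Icc (0:ℝ) Δ', t*t = Δ'^3/3 := by
    intro Δ' h
    rw [integral_Icc_eq_integral_Ioc, ← intervalIntegral.integral_of_le h.le]
    simp_rw [← sq]
    rw [integral_pow]; ring
  have h0 : ∀ Δ' : ℝ, 0 < Δ' → ∫ _t in Set.Icc (0:ℝ) Δ', (1:ℝ) = Δ' := by
    intro Δ' h; simp [Real.volume_Icc, h.le]
  by_cases hij : i = j
  · subst hij
    rw [if_pos rfl]
    have : ∀ l, (∫ t in Set.Icc (0:ℝ) (Δ l), ((if l = i then t else 1) * (if l = i then t else 1)))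
        = if l = i then Δ i^3/3 else Δ l := by
      intro l
      by_cases hl : l = i
      · subst hl
        simp only [eq_self_iff_true, if_true]
        exact h2 _ (hΔ l)
      · simp only [if_neg hl, one_mul]
        exact h0 _ (hΔ l)
    simp_rw [this]
    rw [← Finset.mul_prod_erase _ _ (Finset.mem_univ i), if_pos rfl,
        ← Finset.mul_prod_erase _ Δ (Finset.mem_univ i)]
    rw [Finset.prod_congr rfl (fun l hl => if_neg (Finset.ne_of_mem_erase hl))]
    ring
  · have : ∀ l, (∫ t in Set.Icc (0:ℝ) (Δ l), ((if l = i then t else 1) * (if l = j then t else 1)))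
        = if l = i then Δ i^2/2 else if l = j then Δ j^2/2 else Δ l := by
      intro l
      by_cases hl : l = i
      · subst hl
        simp only [if_neg hij, eq_self_iff_true, if_true, mul_one]
        exact h1 _ (hΔ l)
      · by_cases hl' : l = j
        · subst hl'
          simp only [if_neg hl, eq_self_iff_true, if_true, one_mul]
          exact h1 _ (hΔ l)
        · simp only [if_neg hl, if_neg hl', one_mul]
          exact h0 _ (hΔ l)
    rw [if_neg hij]
    simp_rw [this]
    have hji : j ∈ Finset.univ.erase i := Finset.mem_erase.mpr ⟨fun h => hij h.symm, Finset.mem_univ j⟩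
    rw [← Finset.mul_prod_erase _ _ (Finset.mem_univ i), if_pos rfl,
        ← Finset.mul_prod_erase _ _ hji, if_neg (fun h => hij h.symm), if_pos rfl,
        ← Finset.mul_prod_erase _ Δ (Finset.mem_univ i),
        ← Finset.mul_prod_erase _ Δ hji]
    rw [Finset.prod_congr rfl (fun l hl => by
      rw [if_neg (Finset.ne_of_mem_erase (Finset.mem_of_mem_erase hl)),
          if_neg (Finset.ne_of_mem_erase hl)])]
    ring

open MeasureTheory Set in
lemma v_closed {n : ℕ} (Δ : Fin n → ℝ) (hΔ : ∀ i, 0 < Δ i) (g : Fin n → ℝ) (i : Fin n) :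
    (∫ x in box Δ, x i * ∑ j, g j * x j)
      = (∏ l, Δ l) * (Δ i * (g i * Δ i / 12 + (∑ j, g j * Δ j) / 4)) := by
  set S : Set (Fin n → ℝ) := Set.pi Set.univ (fun l => Set.Icc (0:ℝ) (Δ l)) with hS
  have hbox : box Δ = (MeasurableEquiv.toLp 2 (Fin n → ℝ)).symm ⁻¹' S := by
    ext x
    simp only [box, Set.mem_setOf_eq, Set.mem_preimage, Set.mem_pi, Set.mem_univ, true_implies, hS]
    exact Iff.rfl
  have step1 : (∫ x in box Δ, x i * ∑ j, g j * x j)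
      = ∫ y in S, y i * ∑ j, g j * y j := by
    rw [hbox]
    exact (EuclideanSpace.volume_preserving_symm_measurableEquiv_toLp (Fin n)).setIntegral_preimage_emb
      (MeasurableEquiv.toLp 2 (Fin n → ℝ)).symm.measurableEmbedding
      (fun y => y i * ∑ j, g j * y j) S
  rw [step1]
  have hint : ∀ j : Fin n, IntegrableOn (fun y : Fin n → ℝ => g j * (y i * y j)) S := by
    intro j
    have hc : IsCompact S := isCompact_univ_pi (fun l => isCompact_Icc)
    exact (continuous_const.mul ((continuous_apply i).mul (continuous_apply j))).continuousOn.integrableOn_compact hc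
  have step2 : (∫ y in S, y i * ∑ j, g j * y j)
      = ∑ j, ∫ y in S, g j * (y i * y j) := by
    rw [← integral_finset_sum _ (fun j _ => hint j)]
    congr 1; ext y
    rw [Finset.mul_sum]
    exact Finset.sum_congr rfl fun j _ => by ring
  rw [step2]
  have step3 : ∀ j : Fin n, (∫ y in S, g j * (y i * y j))
      = g j * ((∏ l, Δ l) * (if i = j then Δ i ^ 2 / 3 else Δ i * Δ j / 4)) := by
    intro j
    rw [integral_const_mul, moment Δ hΔ i j]
  simp_rw [step3]
  rw [← Finset.sum_erase_add _ _ (Finset.mem_univ i), if_pos rfl]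
  have : ∀ j ∈ Finset.univ.erase i,
      g j * ((∏ l, Δ l) * (if i = j then Δ i ^ 2 / 3 else Δ i * Δ j / 4))
      = (g j * Δ j) * ((∏ l, Δ l) * Δ i / 4) := by
    intro j hj
    rw [if_neg (fun h => (Finset.ne_of_mem_erase hj) h.symm)]
    ring
  rw [Finset.sum_congr rfl this, ← Finset.sum_mul]
  have hsum : ∑ j ∈ Finset.univ.erase i, g j * Δ j = (∑ j, g j * Δ j) - g i * Δ i := by
    rw [eq_sub_iff_add_eq, Finset.sum_erase_add _ _ (Finset.mem_univ i)]
  rw [hsum]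
  ring

/-- Lemma 4.1 of the paper: with `vᵢ = ∫_{R(0;d)} xᵢ·(gᵀx) dx`, we have
`(1/Δ)·Lₙ·v = g`. -/
theorem Ln_v_eq_g
    (n : ℕ) (hn : 1 ≤ n)
    (Δ : Fin n → ℝ) (hΔ : ∀ i, 0 < Δ i)
    (g : Fin n → ℝ) (v : Fin n → ℝ)
    (hv : ∀ i, v i = ∫ x in box Δ, x i * ∑ j, g j * x j) :
    (∏ l, Δ l)⁻¹ • Matrix.mulVec (Lmat n Δ) v = g := by
  have hD : (0:ℝ) < ∏ l, Δ l := Finset.prod_pos fun l _ => hΔ l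
  set D : ℝ := ∏ l, Δ l with hDdef
  set S : ℝ := ∑ j, g j * Δ j with hSdef
  have hc : (3 * (n:ℝ) + 1) ≠ 0 := by positivity
  have hvc : ∀ j, v j = D * (Δ j * (g j * Δ j / 12 + S / 4)) := by
    intro j; rw [hv j, v_closed Δ hΔ g j]
  funext i
  have hΔi : Δ i ≠ 0 := (hΔ i).ne'
  show D⁻¹ • (∑ j, Lmat n Δ i j * v j) = g i
  simp only [smul_eq_mul]
  simp_rw [hvc]
  rw [← Finset.sum_erase_add _ _ (Finset.mem_univ i)]
  have hdiag : Lmat n Δ i i = 12 * (3 * (n : ℝ) - 2) / ((Δ i) ^ 2 * (3 * (n : ℝ) + 1)) := by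
    simp [Lmat]
  have hoff : ∀ j ∈ Finset.univ.erase i,
      Lmat n Δ i j * (D * (Δ j * (g j * Δ j / 12 + S / 4)))
      = (g j * Δ j) * (-3 * D / (Δ i * (3 * (n:ℝ) + 1)))
        + (-9 * S * D / (Δ i * (3 * (n:ℝ) + 1))) := by
    intro j hj
    have hij : ¬ i = j := fun h => (Finset.ne_of_mem_erase hj) h.symm
    have hΔj : Δ j ≠ 0 := (hΔ j).ne'
    simp only [Lmat, Matrix.of_apply, if_neg hij]
    field_simp
    ring
  rw [Finset.sum_congr rfl hoff, Finset.sum_add_distrib, ← Finset.sum_mul,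
    Finset.sum_const, Finset.card_erase_of_mem (Finset.mem_univ i), Finset.card_univ,
    Fintype.card_fin]
  have hsum : ∑ j ∈ Finset.univ.erase i, g j * Δ j = S - g i * Δ i := by
    rw [eq_sub_iff_add_eq, Finset.sum_erase_add _ _ (Finset.mem_univ i), hSdef]
  rw [hsum, hdiag, nsmul_eq_mul, Nat.cast_sub hn, Nat.cast_one]
  field_simp
  ring

end
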